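/- Let X = {x_1,…,x_{3n}} be a set and T = {T_1,…,T_m} a family of 3-element subsets of X with m ≥ n; write T_i = {x_{i₁}, x_{i₂}, x_{i₃}}. Construct the CAPR instance J with lexicographic preferences as follows: applicants a_1,…,a_{m+1} with capacities q(a_i) = 4 for 1 ≤ i ≤ m and q(a_{m+1}) = 2n + m; courses T ∪ X ∪ Y ∪ W, where Y = {y_1,…,y_m} and W = {w_1,…,w_{m−n}}, each course of capacity 1; preference lists P(a_i): T_i, all courses of W in some fixed order, y_i, x_{i₁}, x_{i₂}, x_{i₃} (for 1 ≤ i ≤ m), and P(a_{m+1}): y_1, all courses of X in some fixed order, all courses of W in some fixed order, y_2, …, y_m; prerequisites: for 1 ≤ i ≤ m, the strict partial order →_{a_i} is the transitive closure of T_i →_{a_i} x_{i₁} →_{a_i} x_{i₂} →_{a_i} x_{i₃}, and →_{a_{m+1}} is the transitive closure of y_1 →_{a_{m+1}} y_2 →_{a_{m+1}} … →_{a_{m+1}} y_m. Let M = {(a_i, y_i) : 1 ≤ i ≤ m} ∪ {(a_{m+1}, x_j) : 1 ≤ j ≤ 3n} ∪ {(a_{m+1}, w_k) : 1 ≤ k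 ≤ m−n}. Then there exists a subfamily T' ⊆ T of pairwise disjoint triples whose union is X (an exact 3-cover) if and only if some matching M' of J dominates M. -/

import Mathlib

open Finset

attribute [-instance] Sum.instBEq

/-- The bundle of courses assigned to applicant `a` by the assignment `M`. -/
def bundle {A C : Type*} [DecidableEq A] [DecidableEq C]
    (M : Finset (A × C)) (a : A) : Finset C :=
  (M.filter fun p => p.1 = a).image Prod.snd

/-- The number of applicants assigned to course `c` by the assignment `M`. -/
def slots {A C : Type*} [DecidableEq C] (M : Finset (A × C)) (c : C) : ℕ :=
  (M.filter fun p => p.2 = c).card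

/-- Lexicographic comparison of bundles w.r.t. a preference list (earlier = better). -/
def lexPrefers {C : Type*} [DecidableEq C] (l : List C) (S₁ S₂ : Finset C) : Prop :=
  ∃ c ∈ S₁ \ S₂, ∀ d ∈ (S₁ \ S₂) ∪ (S₂ \ S₁), l.idxOf c ≤ l.idxOf d

def IsFeasible {A C : Type*} (pref : A → List C) (qA : A → ℕ)
    (prereq : A → C → C → Prop) (a : A) (S : Finset C) : Prop :=
  (∀ c ∈ S, c ∈ pref a) ∧ S.card ≤ qA a ∧
    ∀ c ∈ S, ∀ c', prereq a c c' → c' ∈ S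

def IsMatching {A C : Type*} [DecidableEq A] [DecidableEq C]
    (pref : A → List C) (qA : A → ℕ) (qC : C → ℕ)
    (prereq : A → C → C → Prop) (M : Finset (A × C)) : Prop :=
  (∀ a, IsFeasible pref qA prereq a (bundle M a)) ∧ ∀ c, slots M c ≤ qC c

def Dominates {A C : Type*} [DecidableEq A] [DecidableEq C]
    (pref : A → List C) (M' M : Finset (A × C)) : Prop :=
  (∃ a, lexPrefers (pref a) (bundle M' a) (bundle M a)) ∧
    ∀ a, ¬ lexPrefers (pref a) (bundle M a) (bundle M' a)

/-- The courses of the instance `J`: the `T`-courses, the `X`-courses,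
the `Y`-courses and the `W`-courses. -/
abbrev Course (m n : ℕ) := (Fin m) ⊕ ((Fin (3 * n)) ⊕ ((Fin m) ⊕ (Fin (m - n))))

def cT {m n : ℕ} (i : Fin m) : Course m n := Sum.inl i
def cX {m n : ℕ} (x : Fin (3 * n)) : Course m n := Sum.inr (Sum.inl x)
def cY {m n : ℕ} (i : Fin m) : Course m n := Sum.inr (Sum.inr (Sum.inl i))
def cW {m n : ℕ} (k : Fin (m - n)) : Course m n := Sum.inr (Sum.inr (Sum.inr k))

/-- Preference lists of the applicants `a_1, …, a_{m+1}` (an applicant is an element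
of `Fin (m+1)`; the ones with value `< m` are `a_1, …, a_m` and the last one is
`a_{m+1}`).  `t i` gives the three elements `x_{i₁}, x_{i₂}, x_{i₃}` of the triple
`T_i`; `lW`, `lX`, `lW'` are the fixed orderings of `W` and `X` used in the lists. -/
def prefJ {m n : ℕ} (hm : 0 < m) (t : Fin m → Fin 3 → Fin (3 * n))
    (lW : List (Fin (m - n))) (lX : List (Fin (3 * n))) (lW' : List (Fin (m - n))) :
    Fin (m + 1) → List (Course m n) := fun a =>
  if h : (a : ℕ) < m then
    let i : Fin m := ⟨a, h⟩
    cT i :: (lW.map cW ++ [cY i, cX (t i 0), cX (t i 1), cX (t i 2)])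
  else
    cY (⟨0, hm⟩ : Fin m) ::
      (lX.map cX ++ lW'.map cW ++ ((List.finRange m).drop 1).map cY)

/-- The prerequisites: for `a_i` (`i ≤ m`) the transitive closure of the chain
`T_i → x_{i₁} → x_{i₂} → x_{i₃}`; for `a_{m+1}` the transitive closure of the
chain `y_1 → y_2 → … → y_m`. -/
def prereqJ {m n : ℕ} (t : Fin m → Fin 3 → Fin (3 * n)) :
    Fin (m + 1) → Course m n → Course m n → Prop := fun a c c' =>
  if h : (a : ℕ) < m then
    let i : Fin m := ⟨a, h⟩
    (c = cT i ∧ (c' = cX (t i 0) ∨ c' = cX (t i 1) ∨ c' = cX (t i 2))) ∨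
    (c = cX (t i 0) ∧ (c' = cX (t i 1) ∨ c' = cX (t i 2))) ∨
    (c = cX (t i 1) ∧ c' = cX (t i 2))
  else
    ∃ j k : Fin m, j < k ∧ c = cY j ∧ c' = cY k

/-- The matching `M` of the statement: `a_i` gets `y_i` for `1 ≤ i ≤ m`, and
`a_{m+1}` gets all of `X` and all of `W`. -/
def M₀ {m n : ℕ} : Finset (Fin (m + 1) × Course m n) :=
  ((Finset.univ : Finset (Fin m)).image fun i => (Fin.castSucc i, cY i)) ∪
    ((Finset.univ : Finset (Fin (3 * n))).image fun x => (Fin.last m, cX x)) ∪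
    ((Finset.univ : Finset (Fin (m - n))).image fun k => (Fin.last m, cW k))


section Helpers

variable {A C : Type*} [DecidableEq A] [DecidableEq C]

lemma mem_bundle {M : Finset (A × C)} {a : A} {c : C} :
    c ∈ bundle M a ↔ (a, c) ∈ M := by
  constructor
  · intro h
    simp only [bundle, Finset.mem_image, Finset.mem_filter] at h
    obtain ⟨⟨a', c'⟩, ⟨hM, ha⟩, hc⟩ := h
    cases ha; cases hc; exact hM
  · intro h
    simp only [bundle, Finset.mem_image, Finset.mem_filter]
    exact ⟨(a, c), ⟨h, rfl⟩, rfl⟩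

lemma slots_unique {M : Finset (A × C)} {c : C} (h : slots M c ≤ 1)
    {a b : A} (ha : (a, c) ∈ M) (hb : (b, c) ∈ M) : a = b := by
  have := Finset.card_le_one.mp h (a, c)
    (Finset.mem_filter.mpr ⟨ha, rfl⟩) (b, c) (Finset.mem_filter.mpr ⟨hb, rfl⟩)
  exact congrArg Prod.fst this

lemma lexPrefers_total (l : List C) {S₁ S₂ : Finset C} (h : S₁ ≠ S₂) :
    lexPrefers l S₁ S₂ ∨ lexPrefers l S₂ S₁ := by
  have hne : ((S₁ \ S₂) ∪ (S₂ \ S₁)).Nonempty := by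
    rw [Finset.nonempty_iff_ne_empty]
    intro hc
    apply h
    rw [Finset.union_eq_empty, Finset.sdiff_eq_empty_iff_subset,
      Finset.sdiff_eq_empty_iff_subset] at hc
    exact Finset.Subset.antisymm hc.1 hc.2
  obtain ⟨c, hc, hmin⟩ := Finset.exists_min_image _ (fun d => l.idxOf d) hne
  rcases Finset.mem_union.mp hc with h1 | h2
  · exact Or.inl ⟨c, h1, hmin⟩
  · exact Or.inr ⟨c, h2, by rwa [Finset.union_comm]⟩

lemma not_lexPrefers_self (l : List C) (S : Finset C) : ¬ lexPrefers l S S := by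
  rintro ⟨c, hc, -⟩; simp at hc

end Helpers

section Instance

variable {m n : ℕ}

lemma prefJ_castSucc (hm : 0 < m) (t : Fin m → Fin 3 → Fin (3 * n))
    (lW : List (Fin (m - n))) (lX : List (Fin (3 * n))) (lW' : List (Fin (m - n)))
    (i : Fin m) :
    prefJ hm t lW lX lW' (Fin.castSucc i) =
      cT i :: (lW.map cW ++ [cY i, cX (t i 0), cX (t i 1), cX (t i 2)]) := by
  have h : ((Fin.castSucc i : Fin (m + 1)) : ℕ) < m := by
    simpa using i.isLt
  simp only [prefJ, dif_pos h]
  simp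

lemma prefJ_last (hm : 0 < m) (t : Fin m → Fin 3 → Fin (3 * n))
    (lW : List (Fin (m - n))) (lX : List (Fin (3 * n))) (lW' : List (Fin (m - n))) :
    prefJ hm t lW lX lW' (Fin.last m) =
      cY (⟨0, hm⟩ : Fin m) ::
        (lX.map cX ++ lW'.map cW ++ ((List.finRange m).drop 1).map cY) := by
  have h : ¬ ((Fin.last m : Fin (m + 1)) : ℕ) < m := by simp
  simp only [prefJ, dif_neg h]

lemma M₀_mem {a : Fin (m + 1)} {c : Course m n} :
    (a, c) ∈ (M₀ : Finset (Fin (m + 1) × Course m n)) ↔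
      (∃ i : Fin m, a = Fin.castSucc i ∧ c = cY i) ∨
      (a = Fin.last m ∧ ((∃ x, c = cX x) ∨ (∃ k, c = cW k))) := by
  simp only [M₀, Finset.mem_union, Finset.mem_image, Finset.mem_univ, true_and,
    Prod.ext_iff]
  constructor
  · rintro ((⟨i, hi, hc⟩ | ⟨x, hx, hc⟩) | ⟨k, hk, hc⟩)
    · exact Or.inl ⟨i, hi.symm, hc.symm⟩
    · exact Or.inr ⟨hx.symm, Or.inl ⟨x, hc.symm⟩⟩
    · exact Or.inr ⟨hk.symm, Or.inr ⟨k, hc.symm⟩⟩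
  · rintro (⟨i, rfl, rfl⟩ | ⟨rfl, (⟨x, rfl⟩ | ⟨k, rfl⟩)⟩)
    · exact Or.inl (Or.inl ⟨i, rfl, rfl⟩)
    · exact Or.inl (Or.inr ⟨x, rfl, rfl⟩)
    · exact Or.inr ⟨k, rfl, rfl⟩

lemma castSucc_ne_last (i : Fin m) : (Fin.castSucc i : Fin (m + 1)) ≠ Fin.last m :=
  (Fin.castSucc_lt_last i).ne

lemma bundle_M₀_castSucc (i : Fin m) :
    bundle (M₀ : Finset (Fin (m + 1) × Course m n)) (Fin.castSucc i) = {cY i} := by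
  ext c
  rw [mem_bundle, M₀_mem, Finset.mem_singleton]
  constructor
  · rintro (⟨j, hj, rfl⟩ | ⟨h, -⟩)
    · rw [(Fin.castSucc_injective m) hj]
    · exact absurd h (castSucc_ne_last i)
  · rintro rfl
    exact Or.inl ⟨i, rfl, rfl⟩

lemma bundle_M₀_last :
    bundle (M₀ : Finset (Fin (m + 1) × Course m n)) (Fin.last m) =
      (Finset.univ.image cX) ∪ (Finset.univ.image cW) := by
  ext c
  rw [mem_bundle, M₀_mem]
  simp only [Finset.mem_union, Finset.mem_image, Finset.mem_univ, true_and]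
  constructor
  · rintro (⟨j, hj, hc⟩ | ⟨x, hc⟩ | ⟨k, hc⟩)
    · exact absurd hj.symm (castSucc_ne_last j)
    · exact Or.inl ⟨x, hc.symm⟩
    · exact Or.inr ⟨k, hc.symm⟩
  · rintro (⟨x, hc⟩ | ⟨k, hc⟩)
    · exact Or.inr (Or.inl ⟨x, hc.symm⟩)
    · exact Or.inr (Or.inr ⟨k, hc.symm⟩)

end Instance


section Stage2

variable {m n : ℕ}

@[simp] lemma cT_inj' {i j : Fin m} : (cT i : Course m n) = cT j ↔ i = j := by
  simp [cT]
@[simp] lemma cX_inj' {x y : Fin (3 * n)} : (cX x : Course m n) = cX y ↔ x = y := by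
  simp [cX]
@[simp] lemma cY_inj' {i j : Fin m} : (cY i : Course m n) = cY j ↔ i = j := by
  simp [cY]
@[simp] lemma cW_inj' {x y : Fin (m - n)} : (cW x : Course m n) = cW y ↔ x = y := by
  simp [cW]
@[simp] lemma cT_ne_cX {i : Fin m} {x : Fin (3 * n)} : (cT i : Course m n) ≠ cX x := by
  simp [cT, cX]
@[simp] lemma cT_ne_cY {i j : Fin m} : (cT i : Course m n) ≠ cY j := by simp [cT, cY]
@[simp] lemma cT_ne_cW {i : Fin m} {k : Fin (m - n)} : (cT i : Course m n) ≠ cW k := by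
  simp [cT, cW]
@[simp] lemma cX_ne_cT {i : Fin m} {x : Fin (3 * n)} : (cX x : Course m n) ≠ cT i := by
  simp [cT, cX]
@[simp] lemma cX_ne_cY {j : Fin m} {x : Fin (3 * n)} : (cX x : Course m n) ≠ cY j := by
  simp [cY, cX]
@[simp] lemma cX_ne_cW {k : Fin (m - n)} {x : Fin (3 * n)} : (cX x : Course m n) ≠ cW k := by
  simp [cW, cX]
@[simp] lemma cY_ne_cT {i j : Fin m} : (cY i : Course m n) ≠ cT j := by simp [cT, cY]
@[simp] lemma cY_ne_cX {j : Fin m} {x : Fin (3 * n)} : (cY j : Course m n) ≠ cX x := by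
  simp [cY, cX]
@[simp] lemma cY_ne_cW {j : Fin m} {k : Fin (m - n)} : (cY j : Course m n) ≠ cW k := by
  simp [cY, cW]
@[simp] lemma cW_ne_cT {i : Fin m} {k : Fin (m - n)} : (cW k : Course m n) ≠ cT i := by
  simp [cT, cW]
@[simp] lemma cW_ne_cX {k : Fin (m - n)} {x : Fin (3 * n)} : (cW k : Course m n) ≠ cX x := by
  simp [cW, cX]
@[simp] lemma cW_ne_cY {j : Fin m} {k : Fin (m - n)} : (cW k : Course m n) ≠ cY j := by
  simp [cY, cW]

lemma indexOf_zero_head {C : Type*} [DecidableEq C] {h : C} {tl : List C} {c : C}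
    (hc : (h :: tl).idxOf c ≤ 0) : c = h := by
  by_contra hne
  rw [List.idxOf_cons_ne _ (Ne.symm hne)] at hc
  exact Nat.not_succ_le_zero _ hc

lemma mem_drop_finRange (hm : 0 < m) {j : Fin m} (hj : j ≠ ⟨0, hm⟩) :
    j ∈ (List.finRange m).drop 1 := by
  have hj0 : 0 < (j : ℕ) := by
    rcases Nat.eq_zero_or_pos (j : ℕ) with h | h
    · exact absurd (Fin.ext h) hj
    · exact h
  rw [List.mem_iff_getElem]
  have hlt : (j : ℕ) - 1 < ((List.finRange m).drop 1).length := by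
    simp only [List.length_drop, List.length_finRange]
    omega
  refine ⟨(j : ℕ) - 1, hlt, ?_⟩
  rw [List.getElem_drop, List.getElem_finRange]
  apply Fin.ext
  simp
  omega

/-- index facts in the list of applicant `a_{m+1}`. -/
lemma last_indexOf_lt (hm : 0 < m) (t : Fin m → Fin 3 → Fin (3 * n))
    (lW : List (Fin (m - n))) (lX : List (Fin (3 * n))) (lW' : List (Fin (m - n)))
    {j : Fin m} (hj : j ≠ ⟨0, hm⟩) {d : Course m n}
    (hd : (∃ x, d = cX x ∧ x ∈ lX) ∨ ∃ k, d = cW k ∧ k ∈ lW') :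
    (prefJ hm t lW lX lW' (Fin.last m)).idxOf d <
      (prefJ hm t lW lX lW' (Fin.last m)).idxOf (cY j) := by
  rw [prefJ_last]
  set A := lX.map (cX (m := m) (n := n)) ++ lW'.map cW with hA
  have hdA : d ∈ A := by
    rcases hd with ⟨x, rfl, hx⟩ | ⟨k, rfl, hk⟩
    · exact List.mem_append_left _ (List.mem_map_of_mem hx)
    · exact List.mem_append_right _ (List.mem_map_of_mem hk)
  have hdne : cY (⟨0, hm⟩ : Fin m) ≠ d := by
    rcases hd with ⟨x, rfl, -⟩ | ⟨k, rfl, -⟩ <;> simp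
  have hYne : (cY (⟨0, hm⟩ : Fin m) : Course m n) ≠ cY j := by
    simp only [ne_eq, cY_inj']
    exact fun h => hj h.symm
  have hYA : (cY j : Course m n) ∉ A := by
    simp [hA]
  rw [List.idxOf_cons_ne _ hdne, List.idxOf_cons_ne _ hYne]
  apply Nat.succ_lt_succ
  rw [List.idxOf_append_of_mem hdA, List.idxOf_append_of_notMem hYA]
  calc A.idxOf d < A.length := List.idxOf_lt_length_iff.mpr hdA
    _ ≤ A.length + _ := Nat.le_add_right _ _

/-- index facts in the list of applicant `a_i`. -/
lemma ai_list_facts (hm : 0 < m) (t : Fin m → Fin 3 → Fin (3 * n))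
    (lW : List (Fin (m - n))) (lX : List (Fin (3 * n))) (lW' : List (Fin (m - n)))
    (i : Fin m) :
    (∀ k ∈ lW, (prefJ hm t lW lX lW' i.castSucc).idxOf (cW k) <
      (prefJ hm t lW lX lW' i.castSucc).idxOf (cY i)) ∧
    (∀ r : Fin 3, (prefJ hm t lW lX lW' i.castSucc).idxOf (cY i) <
      (prefJ hm t lW lX lW' i.castSucc).idxOf (cX (t i r))) := by
  rw [prefJ_castSucc]
  have hYW : (cY i : Course m n) ∉ lW.map cW := by simp
  have hYidx : (lW.map (cW (m := m) (n := n)) ++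
      [cY i, cX (t i 0), cX (t i 1), cX (t i 2)]).idxOf (cY i) = (lW.map cW).length := by
    rw [List.idxOf_append_of_notMem hYW, List.idxOf_cons_self, Nat.add_zero]
  constructor
  · intro k hk
    have hmem : (cW k : Course m n) ∈ lW.map cW := List.mem_map_of_mem hk
    rw [List.idxOf_cons_ne _ (by simp : (cT i : Course m n) ≠ cW k),
      List.idxOf_cons_ne _ (by simp : (cT i : Course m n) ≠ cY i)]
    apply Nat.succ_lt_succ
    rw [List.idxOf_append_of_mem hmem, hYidx]
    exact List.idxOf_lt_length_iff.mpr hmem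
  · intro r
    rw [List.idxOf_cons_ne _ (by simp : (cT i : Course m n) ≠ cY i),
      List.idxOf_cons_ne _ (by simp : (cT i : Course m n) ≠ cX (t i r))]
    apply Nat.succ_lt_succ
    have hXW : (cX (t i r) : Course m n) ∉ lW.map cW := by simp
    have hpos : 0 < ([cY i, cX (t i 0), cX (t i 1), cX (t i 2)] :
        List (Course m n)).idxOf (cX (t i r)) := by
      rw [List.idxOf_cons_ne _ (cY_ne_cX)]
      exact Nat.succ_pos _
    rw [List.idxOf_append_of_notMem hXW, hYidx]
    exact Nat.lt_add_of_pos_right hpos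

lemma mem_last_cases (hm : 0 < m) (t : Fin m → Fin 3 → Fin (3 * n))
    (lW : List (Fin (m - n))) (lX : List (Fin (3 * n))) (lW' : List (Fin (m - n)))
    {c : Course m n} (hc : c ∈ prefJ hm t lW lX lW' (Fin.last m)) :
    (∃ j, c = cY j) ∨ (∃ x, c = cX x) ∨ ∃ k, c = cW k := by
  rcases c with i | x | j | k
  · exfalso
    rw [prefJ_last] at hc
    simp [cT, cX, cY, cW, ← List.map_tail] at hc
  · exact Or.inr (Or.inl ⟨x, rfl⟩)
  · exact Or.inl ⟨j, rfl⟩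
  · exact Or.inr (Or.inr ⟨k, rfl⟩)

lemma mem_castSucc_cases (hm : 0 < m) (t : Fin m → Fin 3 → Fin (3 * n))
    (lW : List (Fin (m - n))) (lX : List (Fin (3 * n))) (lW' : List (Fin (m - n)))
    {i : Fin m} {c : Course m n} (hc : c ∈ prefJ hm t lW lX lW' i.castSucc) :
    c = cT i ∨ (∃ k, c = cW k ∧ k ∈ lW) ∨ c = cY i ∨
      c = cX (t i 0) ∨ c = cX (t i 1) ∨ c = cX (t i 2) := by
  rw [prefJ_castSucc] at hc
  rcases List.mem_cons.mp hc with rfl | hc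
  · exact Or.inl rfl
  rcases List.mem_append.mp hc with h | h
  · obtain ⟨k, hk, rfl⟩ := List.mem_map.mp h
    exact Or.inr (Or.inl ⟨k, rfl, hk⟩)
  · simp only [List.mem_cons, List.not_mem_nil, or_false] at h
    rcases h with rfl | rfl | rfl | rfl
    · exact Or.inr (Or.inr (Or.inl rfl))
    · exact Or.inr (Or.inr (Or.inr (Or.inl rfl)))
    · exact Or.inr (Or.inr (Or.inr (Or.inr (Or.inl rfl))))
    · exact Or.inr (Or.inr (Or.inr (Or.inr (Or.inr rfl))))

end Stage2


section Forward

variable {m n : ℕ}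

lemma triple_card (t : Fin m → Fin 3 → Fin (3 * n))
    (htinj : ∀ i, Function.Injective (t i)) (i : Fin m) :
    ({t i 0, t i 1, t i 2} : Finset (Fin (3 * n))).card = 3 := by
  have h01 : t i 0 ≠ t i 1 := fun h => absurd (htinj i h) (by decide)
  have h02 : t i 0 ≠ t i 2 := fun h => absurd (htinj i h) (by decide)
  have h12 : t i 1 ≠ t i 2 := fun h => absurd (htinj i h) (by decide)
  rw [Finset.card_insert_of_notMem (by simp [h01, h02]),
    Finset.card_insert_of_notMem (by simp [h12]), Finset.card_singleton]

lemma castSucc_eq_of_lt {a : Fin (m + 1)} (h : (a : ℕ) < m) :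
    a = Fin.castSucc ⟨a.1, h⟩ := by
  apply Fin.ext
  simp

lemma eq_last_of_not_lt {a : Fin (m + 1)} (h : ¬ (a : ℕ) < m) : a = Fin.last m := by
  apply Fin.ext
  have := a.isLt
  simp only [Fin.val_last]
  omega

lemma forward_dir (hm : 0 < m) (hmn : n ≤ m)
    (t : Fin m → Fin 3 → Fin (3 * n)) (htinj : ∀ i, Function.Injective (t i))
    (lW : List (Fin (m - n))) (hlWall : ∀ k, k ∈ lW)
    (lX : List (Fin (3 * n))) (hlXall : ∀ x, x ∈ lX)
    (lW' : List (Fin (m - n))) (hlW'all : ∀ k, k ∈ lW')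
    (T' : Finset (Fin m))
    (hdisj : (T' : Set (Fin m)).Pairwise fun i j =>
      Disjoint ({t i 0, t i 1, t i 2} : Finset (Fin (3 * n))) {t j 0, t j 1, t j 2})
    (hcover : T'.biUnion (fun i => ({t i 0, t i 1, t i 2} : Finset (Fin (3 * n)))) =
      Finset.univ) :
    ∃ M' : Finset (Fin (m + 1) × Course m n),
      IsMatching (prefJ hm t lW lX lW')
        (fun a => if (a : ℕ) < m then 4 else 2 * n + m) (fun _ => 1)
        (prereqJ t) M' ∧
      Dominates (prefJ hm t lW lX lW') M' M₀ := by
  classical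
  -- `T'` has exactly `n` elements
  have hcardT' : T'.card = n := by
    have h1 := Finset.card_biUnion
      (fun x hx y hy hxy => hdisj hx hy hxy)
    rw [hcover] at h1
    simp only [Finset.card_univ, Fintype.card_fin] at h1
    have h2 : ∀ i ∈ T', ({t i 0, t i 1, t i 2} : Finset (Fin (3 * n))).card = 3 :=
      fun i _ => triple_card t htinj i
    rw [Finset.sum_congr rfl h2, Finset.sum_const, smul_eq_mul] at h1
    omega
  set R : Finset (Fin m) := Finset.univ \ T' with hR
  have hRcard : R.card = m - n := by
    rw [hR, Finset.card_sdiff_of_subset (Finset.subset_univ _), Finset.card_univ,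
      Fintype.card_fin, hcardT']
  let e : {x // x ∈ R} ≃ Fin (m - n) := (R.equivFin).trans (finCongr hRcard)
  set M' : Finset (Fin (m + 1) × Course m n) :=
    (T'.biUnion fun i => {(i.castSucc, (cT i : Course m n)), (i.castSucc, cX (t i 0)),
        (i.castSucc, cX (t i 1)), (i.castSucc, cX (t i 2))})
      ∪ R.attach.image (fun i => (Fin.castSucc i.1, cW (e i)))
      ∪ Finset.univ.image (fun j => (Fin.last m, cY j)) with hM'
  have hmem : ∀ (a : Fin (m + 1)) (c : Course m n), (a, c) ∈ M' ↔
      (∃ i ∈ T', a = i.castSucc ∧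
        (c = cT i ∨ c = cX (t i 0) ∨ c = cX (t i 1) ∨ c = cX (t i 2))) ∨
      (∃ i : {x // x ∈ R}, a = Fin.castSucc i.1 ∧ c = cW (e i)) ∨
      (a = Fin.last m ∧ ∃ j, c = cY j) := by
    intro a c
    simp only [hM', Finset.mem_union, Finset.mem_biUnion, Finset.mem_image,
      Finset.mem_insert, Finset.mem_singleton, Finset.mem_attach, true_and,
      Finset.mem_univ, Prod.mk.injEq]
    constructor
    · rintro ((⟨i, hi, (⟨h1, h2⟩ | ⟨h1, h2⟩ | ⟨h1, h2⟩ | ⟨h1, h2⟩)⟩ | ⟨i, h1, h2⟩) | ⟨j, h1, h2⟩)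
      · exact Or.inl ⟨i, hi, h1, Or.inl h2⟩
      · exact Or.inl ⟨i, hi, h1, Or.inr (Or.inl h2)⟩
      · exact Or.inl ⟨i, hi, h1, Or.inr (Or.inr (Or.inl h2))⟩
      · exact Or.inl ⟨i, hi, h1, Or.inr (Or.inr (Or.inr h2))⟩
      · exact Or.inr (Or.inl ⟨i, h1.symm, h2.symm⟩)
      · exact Or.inr (Or.inr ⟨h1.symm, j, h2.symm⟩)
    · rintro (⟨i, hi, rfl, (rfl | rfl | rfl | rfl)⟩ | ⟨i, rfl, rfl⟩ | ⟨rfl, j, rfl⟩)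
      · exact Or.inl (Or.inl ⟨i, hi, Or.inl ⟨rfl, rfl⟩⟩)
      · exact Or.inl (Or.inl ⟨i, hi, Or.inr (Or.inl ⟨rfl, rfl⟩)⟩)
      · exact Or.inl (Or.inl ⟨i, hi, Or.inr (Or.inr (Or.inl ⟨rfl, rfl⟩))⟩)
      · exact Or.inl (Or.inl ⟨i, hi, Or.inr (Or.inr (Or.inr ⟨rfl, rfl⟩))⟩)
      · exact Or.inl (Or.inr ⟨i, rfl, rfl⟩)
      · exact Or.inr ⟨j, rfl, rfl⟩
  -- the bundles
  have hbT : ∀ i ∈ T', bundle M' i.castSucc =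
      ({cT i, cX (t i 0), cX (t i 1), cX (t i 2)} : Finset (Course m n)) := by
    intro i hi
    ext c
    rw [mem_bundle, hmem]
    simp only [Finset.mem_insert, Finset.mem_singleton]
    constructor
    · rintro (⟨i', hi', hca, hc⟩ | ⟨i', hca, rfl⟩ | ⟨hca, -⟩)
      · rwa [(Fin.castSucc_injective m hca.symm : i' = i)] at hc
      · exfalso
        have : (i'.1 : Fin m) = i := Fin.castSucc_injective m hca.symm
        have hmem' := i'.2
        rw [this, hR, Finset.mem_sdiff] at hmem'
        exact hmem'.2 hi
      · exact absurd hca (castSucc_ne_last i)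
    · intro hc
      exact Or.inl ⟨i, hi, rfl, hc⟩
  have hbR : ∀ i : {x // x ∈ R}, bundle M' (Fin.castSucc i.1) = {cW (e i)} := by
    intro i
    ext c
    rw [mem_bundle, hmem]
    simp only [Finset.mem_singleton]
    constructor
    · rintro (⟨i', hi', hca, hc⟩ | ⟨i', hca, rfl⟩ | ⟨hca, -⟩)
      · exfalso
        have hii : i' = i.1 := Fin.castSucc_injective m hca.symm
        have hmem' : (i : Fin m) ∈ Finset.univ \ T' := i.2
        rw [Finset.mem_sdiff] at hmem'
        rw [hii] at hi'
        exact hmem'.2 hi'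
      · have : i' = i := Subtype.ext (Fin.castSucc_injective m hca.symm)
        rw [this]
      · exact absurd hca (castSucc_ne_last i.1)
    · rintro rfl
      exact Or.inr (Or.inl ⟨i, rfl, rfl⟩)
  have hbL : bundle M' (Fin.last m) = Finset.univ.image cY := by
    ext c
    rw [mem_bundle, hmem]
    constructor
    · rintro (⟨i', hi', hca, hc⟩ | ⟨i', hca, rfl⟩ | ⟨-, j, rfl⟩)
      · exact absurd hca.symm (castSucc_ne_last i')
      · exact absurd hca.symm (castSucc_ne_last i'.1)
      · exact Finset.mem_image.mpr ⟨j, Finset.mem_univ j, rfl⟩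
    · intro hc
      obtain ⟨j, -, rfl⟩ := Finset.mem_image.mp hc
      exact Or.inr (Or.inr ⟨rfl, j, rfl⟩)
  have hYinj : Function.Injective (cY : Fin m → Course m n) := by
    intro a b h
    simpa using h
  refine ⟨M', ⟨?_, ?_⟩, ?_, ?_⟩
  · -- feasibility
    intro a
    by_cases h : (a : ℕ) < m
    · obtain ⟨i, rfl⟩ : ∃ i : Fin m, a = i.castSucc := ⟨⟨a.1, h⟩, castSucc_eq_of_lt h⟩
      have hq : (if ((Fin.castSucc i : Fin (m + 1)) : ℕ) < m then 4 else 2 * n + m) = 4 := by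
        simp [i.isLt]
      by_cases hi : i ∈ T'
      · rw [hbT i hi]
        refine ⟨?_, ?_, ?_⟩
        · intro c hc
          rw [prefJ_castSucc]
          simp only [Finset.mem_insert, Finset.mem_singleton] at hc
          simp only [List.mem_cons, List.mem_append, List.mem_map, List.mem_singleton,
            List.not_mem_nil, or_false]
          tauto
        · simp only [hq]
          apply (Finset.card_insert_le _ _).trans
          apply Nat.succ_le_succ
          apply (Finset.card_insert_le _ _).trans
          apply Nat.succ_le_succ
          apply (Finset.card_insert_le _ _).trans
          simp
        · intro c hc c' hp
          have hlt : ((Fin.castSucc i : Fin (m + 1)) : ℕ) < m := by simp [i.isLt]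
          rw [prereqJ, dif_pos hlt] at hp
          have hieq : (⟨((Fin.castSucc i : Fin (m + 1)) : ℕ), hlt⟩ : Fin m) = i := by
            apply Fin.ext; simp
          rw [hieq] at hp
          simp only [Finset.mem_insert, Finset.mem_singleton]
          rcases hp with ⟨-, h'⟩ | ⟨-, h'⟩ | ⟨-, h'⟩ <;> tauto
      · have hiR : i ∈ R := by rw [hR, Finset.mem_sdiff]; exact ⟨Finset.mem_univ i, hi⟩
        rw [hbR ⟨i, hiR⟩]
        refine ⟨?_, ?_, ?_⟩
        · intro c hc
          rw [Finset.mem_singleton] at hc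
          subst hc
          rw [prefJ_castSucc]
          simp only [List.mem_cons, List.mem_append, List.mem_map]
          exact Or.inr (Or.inl ⟨_, hlWall _, rfl⟩)
        · simp only [hq, Finset.card_singleton]; omega
        · intro c hc c' hp
          rw [Finset.mem_singleton] at hc
          subst hc
          exfalso
          have hlt : ((Fin.castSucc i : Fin (m + 1)) : ℕ) < m := by simp [i.isLt]
          rw [prereqJ, dif_pos hlt] at hp
          rcases hp with ⟨h', -⟩ | ⟨h', -⟩ | ⟨h', -⟩ <;> simp at h'
    · obtain rfl : a = Fin.last m := eq_last_of_not_lt h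
      rw [hbL]
      have hq : (if ((Fin.last m : Fin (m + 1)) : ℕ) < m then 4 else 2 * n + m) =
          2 * n + m := by simp
      refine ⟨?_, ?_, ?_⟩
      · intro c hc
        simp only [Finset.mem_image, Finset.mem_univ, true_and] at hc
        obtain ⟨j, rfl⟩ := hc
        rw [prefJ_last]
        by_cases hj : j = ⟨0, hm⟩
        · subst hj; exact List.mem_cons_self
        · apply List.mem_cons_of_mem
          apply List.mem_append_right
          exact List.mem_map_of_mem (mem_drop_finRange hm hj)
      · simp only [hq, Finset.card_image_of_injective _ hYinj, Finset.card_univ,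
          Fintype.card_fin]
        omega
      · intro c hc c' hp
        have hnlt : ¬ ((Fin.last m : Fin (m + 1)) : ℕ) < m := by simp
        rw [prereqJ, dif_neg hnlt] at hp
        obtain ⟨j, k, -, -, rfl⟩ := hp
        exact Finset.mem_image.mpr ⟨k, Finset.mem_univ k, rfl⟩
  · -- slots
    have key : ∀ (i i' : Fin m) (c : Course m n), i ∈ T' → i' ∈ T' →
        (c = cT i ∨ c = cX (t i 0) ∨ c = cX (t i 1) ∨ c = cX (t i 2)) →
        (c = cT i' ∨ c = cX (t i' 0) ∨ c = cX (t i' 1) ∨ c = cX (t i' 2)) →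
        i = i' := by
      have norm : ∀ (i₀ : Fin m) (c : Course m n),
          (c = cT i₀ ∨ c = cX (t i₀ 0) ∨ c = cX (t i₀ 1) ∨ c = cX (t i₀ 2)) →
          c = cT i₀ ∨ ∃ x ∈ ({t i₀ 0, t i₀ 1, t i₀ 2} : Finset (Fin (3 * n))),
            c = cX x := by
        intro i₀ c hc0
        rcases hc0 with h | h | h | h
        · exact Or.inl h
        · exact Or.inr ⟨t i₀ 0, by simp, h⟩
        · exact Or.inr ⟨t i₀ 1, by simp, h⟩
        · exact Or.inr ⟨t i₀ 2, by simp, h⟩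
      intro i i' c hi hi' hc hc'
      by_contra hne
      have hd := hdisj hi hi' hne
      rcases norm i c hc with rfl | ⟨x, hx, rfl⟩
      · rcases norm i' _ hc' with h' | ⟨y, hy, h'⟩
        · rw [cT_inj'] at h'
          exact hne h'
        · exact absurd h' (by simp)
      · rcases norm i' _ hc' with h' | ⟨y, hy, h'⟩
        · exact absurd h' (by simp)
        · rw [cX_inj'] at h'
          exact Finset.disjoint_left.mp hd hx (h' ▸ hy)
    have huniq : ∀ (a b : Fin (m + 1)) (c : Course m n),
        (a, c) ∈ M' → (b, c) ∈ M' → a = b := by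
      intro a b c hac hbc
      rw [hmem] at hac hbc
      rcases hac with ⟨i, hi, rfl, hci⟩ | ⟨i, rfl, rfl⟩ | ⟨rfl, j, rfl⟩
      · rcases hbc with ⟨i', hi', rfl, hci'⟩ | ⟨i', rfl, hc2⟩ | ⟨rfl, j', hc2⟩
        · rw [key i i' c hi hi' hci hci']
        · exfalso; rcases hci with rfl | rfl | rfl | rfl <;> simp at hc2
        · exfalso; rcases hci with rfl | rfl | rfl | rfl <;> simp at hc2
      · rcases hbc with ⟨i', hi', rfl, hci'⟩ | ⟨i', rfl, hc2⟩ | ⟨rfl, j', hc2⟩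
        · exfalso; rcases hci' with h | h | h | h <;> simp at h
        · rw [cW_inj'] at hc2
          rw [e.injective hc2]
        · exact absurd hc2 (by simp)
      · rcases hbc with ⟨i', hi', rfl, hci'⟩ | ⟨i', rfl, hc2⟩ | ⟨rfl, j', hc2⟩
        · exfalso; rcases hci' with h | h | h | h <;> simp at h
        · exact absurd hc2.symm (by simp)
        · rfl
    intro c
    apply Finset.card_le_one.mpr
    intro p hp q hq
    rw [Finset.mem_filter] at hp hq
    have hp2 : p.2 = c := hp.2
    have hq2 : q.2 = c := hq.2
    have hp1 : (p.1, c) ∈ M' := by rw [← hp2]; exact hp.1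
    have hq1 : (q.1, c) ∈ M' := by rw [← hq2]; exact hq.1
    have := huniq p.1 q.1 c hp1 hq1
    exact Prod.ext this (hp2.trans hq2.symm)
  · -- someone improves: the last applicant
    refine ⟨Fin.last m, ?_⟩
    rw [hbL, bundle_M₀_last]
    refine ⟨cY ⟨0, hm⟩, ?_, ?_⟩
    · rw [Finset.mem_sdiff]
      constructor
      · exact Finset.mem_image.mpr ⟨_, Finset.mem_univ _, rfl⟩
      · simp
    · intro d hd
      have h0 : (prefJ hm t lW lX lW' (Fin.last m)).idxOf (cY (⟨0, hm⟩ : Fin m)) = 0 := by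
        rw [prefJ_last]; exact List.idxOf_cons_self
      rw [h0]
      exact Nat.zero_le _
  · -- nobody prefers the old matching
    intro a
    by_cases h : (a : ℕ) < m
    · obtain ⟨i, rfl⟩ : ∃ i : Fin m, a = i.castSucc := ⟨⟨a.1, h⟩, castSucc_eq_of_lt h⟩
      rw [bundle_M₀_castSucc]
      by_cases hi : i ∈ T'
      · rw [hbT i hi]
        rintro ⟨c, hc, hmin⟩
        rw [Finset.mem_sdiff, Finset.mem_singleton] at hc
        obtain ⟨rfl, hcnot⟩ := hc
        have hTmem : (cT i : Course m n) ∈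
            ({cT i, cX (t i 0), cX (t i 1), cX (t i 2)} : Finset (Course m n)) \ {cY i} := by
          rw [Finset.mem_sdiff]
          exact ⟨Finset.mem_insert_self _ _, by simp⟩
        have := hmin (cT i) (Finset.mem_union_right _ hTmem)
        have h0 : (prefJ hm t lW lX lW' i.castSucc).idxOf (cT i) = 0 := by
          rw [prefJ_castSucc]; exact List.idxOf_cons_self
        rw [h0, Nat.le_zero] at this
        have hch : (cY i : Course m n) = cT i := by
          apply indexOf_zero_head
            (tl := lW.map cW ++ [cY i, cX (t i 0), cX (t i 1), cX (t i 2)])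
          rw [← prefJ_castSucc hm t lW lX lW' i]
          omega
        simp at hch
      · have hiR : i ∈ R := by rw [hR, Finset.mem_sdiff]; exact ⟨Finset.mem_univ i, hi⟩
        rw [hbR ⟨i, hiR⟩]
        rintro ⟨c, hc, hmin⟩
        rw [Finset.mem_sdiff, Finset.mem_singleton] at hc
        obtain ⟨rfl, hcnot⟩ := hc
        have hWmem : (cW (e ⟨i, hiR⟩) : Course m n) ∈
            ({cW (e ⟨i, hiR⟩)} : Finset (Course m n)) \ {cY i} := by
          rw [Finset.mem_sdiff]
          exact ⟨Finset.mem_singleton_self _, by simp⟩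
        have hle := hmin _ (Finset.mem_union_right _ hWmem)
        have hlt := (ai_list_facts hm t lW lX lW' i).1 (e ⟨i, hiR⟩) (hlWall _)
        omega
    · obtain rfl : a = Fin.last m := eq_last_of_not_lt h
      rw [bundle_M₀_last, hbL]
      rintro ⟨c, hc, hmin⟩
      rw [Finset.mem_sdiff] at hc
      obtain ⟨hcold, hcnew⟩ := hc
      have hYmem : (cY (⟨0, hm⟩ : Fin m) : Course m n) ∈
          (Finset.univ.image cY : Finset (Course m n)) \
            ((Finset.univ.image cX) ∪ (Finset.univ.image cW)) := by
        rw [Finset.mem_sdiff]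
        constructor
        · exact Finset.mem_image.mpr ⟨_, Finset.mem_univ _, rfl⟩
        · simp
      have hle := hmin _ (Finset.mem_union_right _ hYmem)
      have h0 : (prefJ hm t lW lX lW' (Fin.last m)).idxOf (cY (⟨0, hm⟩ : Fin m)) = 0 := by
        rw [prefJ_last]; exact List.idxOf_cons_self
      rw [h0, Nat.le_zero] at hle
      have hch : c = cY ⟨0, hm⟩ := by
        apply indexOf_zero_head (tl := (lX.map cX ++ lW'.map cW ++
          ((List.finRange m).drop 1).map cY))
        rw [prefJ_last] at hle
        omega
      subst hch
      simp only [Finset.mem_union, Finset.mem_image, Finset.mem_univ, true_and] at hcold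
      rcases hcold with ⟨x, hx⟩ | ⟨k, hk⟩
      · exact cX_ne_cY hx
      · exact cW_ne_cY hk

end Forward


section Backward

variable {m n : ℕ}

lemma prereqJ_castSucc_iff (t : Fin m → Fin 3 → Fin (3 * n)) (i : Fin m)
    (c c' : Course m n) :
    prereqJ t i.castSucc c c' ↔
      ((c = cT i ∧ (c' = cX (t i 0) ∨ c' = cX (t i 1) ∨ c' = cX (t i 2))) ∨
       (c = cX (t i 0) ∧ (c' = cX (t i 1) ∨ c' = cX (t i 2))) ∨
       (c = cX (t i 1) ∧ c' = cX (t i 2))) := by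
  have h : ((i.castSucc : Fin (m + 1)) : ℕ) < m := by simp [i.isLt]
  rw [prereqJ, dif_pos h]
  have hieq : (⟨((i.castSucc : Fin (m + 1)) : ℕ), h⟩ : Fin m) = i := by
    apply Fin.ext; simp
  rw [hieq]

lemma prereqJ_last_iff (t : Fin m → Fin 3 → Fin (3 * n)) (c c' : Course m n) :
    prereqJ t (Fin.last m) c c' ↔ ∃ j k : Fin m, j < k ∧ c = cY j ∧ c' = cY k := by
  have h : ¬ ((Fin.last m : Fin (m + 1)) : ℕ) < m := by simp
  rw [prereqJ, dif_neg h]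

lemma backward_dir (hm : 0 < m) (hmn : n ≤ m)
    (t : Fin m → Fin 3 → Fin (3 * n)) (htinj : ∀ i, Function.Injective (t i))
    (lW : List (Fin (m - n))) (hlWall : ∀ k, k ∈ lW)
    (lX : List (Fin (3 * n))) (hlXall : ∀ x, x ∈ lX)
    (lW' : List (Fin (m - n))) (hlW'all : ∀ k, k ∈ lW')
    (M' : Finset (Fin (m + 1) × Course m n))
    (hM : IsMatching (prefJ hm t lW lX lW')
      (fun a => if (a : ℕ) < m then 4 else 2 * n + m) (fun _ => 1) (prereqJ t) M')
    (hdom : Dominates (prefJ hm t lW lX lW') M' M₀) :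
    ∃ T' : Finset (Fin m),
      ((T' : Set (Fin m)).Pairwise fun i j =>
        Disjoint ({t i 0, t i 1, t i 2} : Finset (Fin (3 * n)))
          {t j 0, t j 1, t j 2}) ∧
      T'.biUnion (fun i => ({t i 0, t i 1, t i 2} : Finset (Fin (3 * n)))) =
        Finset.univ := by
  classical
  obtain ⟨hfeas, hslots⟩ := hM
  obtain ⟨himp, hnopref⟩ := hdom
  -- every applicant weakly improves
  have step0 : ∀ a : Fin (m + 1), bundle M' a = bundle M₀ a ∨
      lexPrefers (prefJ hm t lW lX lW' a) (bundle M' a) (bundle M₀ a) := by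
    intro a
    by_cases he : bundle M' a = bundle M₀ a
    · exact Or.inl he
    · rcases lexPrefers_total (prefJ hm t lW lX lW' a) he with h | h
      · exact Or.inr h
      · exact absurd h (hnopref a)
  have hcardold : (bundle (M₀ : Finset (Fin (m + 1) × Course m n)) (Fin.last m)).card =
      3 * n + (m - n) := by
    rw [bundle_M₀_last]
    rw [Finset.card_union_of_disjoint (by
      rw [Finset.disjoint_left]
      rintro c hc1 hc2
      obtain ⟨x, -, rfl⟩ := Finset.mem_image.mp hc1
      obtain ⟨k, -, hk⟩ := Finset.mem_image.mp hc2
      exact cW_ne_cX hk)]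
    rw [Finset.card_image_of_injective _ (fun a b h => by simpa [cX] using h),
      Finset.card_image_of_injective _ (fun a b h => by simpa [cW] using h)]
    simp
  have hcardB : (bundle M' (Fin.last m)).card ≤ 2 * n + m := by
    have := (hfeas (Fin.last m)).2.1
    simpa using this
  -- Claim: either the last applicant's bundle is unchanged, or it contains all of Y
  have hlastcase : bundle M' (Fin.last m) = bundle M₀ (Fin.last m) ∨
      ∀ j : Fin m, (cY j : Course m n) ∈ bundle M' (Fin.last m) := by
    rcases step0 (Fin.last m) with he | hpref
    · exact Or.inl he
    right
    obtain ⟨c, hc, hmin⟩ := hpref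
    rw [Finset.mem_sdiff] at hc
    obtain ⟨hcB, hcold⟩ := hc
    -- c must be a Y course
    obtain ⟨j, rfl⟩ : ∃ j, c = cY j := by
      rcases mem_last_cases hm t lW lX lW' ((hfeas (Fin.last m)).1 c hcB) with
        ⟨j, rfl⟩ | ⟨x, rfl⟩ | ⟨k, rfl⟩
      · exact ⟨j, rfl⟩
      · exact absurd (by
          rw [bundle_M₀_last]
          exact Finset.mem_union_left _ (Finset.mem_image.mpr ⟨x, Finset.mem_univ x, rfl⟩))
          hcold
      · exact absurd (by
          rw [bundle_M₀_last]
          exact Finset.mem_union_right _ (Finset.mem_image.mpr ⟨k, Finset.mem_univ k, rfl⟩))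
          hcold
    -- and in fact the first Y course
    have hj0 : j = ⟨0, hm⟩ := by
      by_contra hj
      have hnotsub : ¬ bundle (M₀ : Finset (Fin (m + 1) × Course m n)) (Fin.last m) ⊆
          bundle M' (Fin.last m) := by
        intro hsub
        have h1 : insert (cY j : Course m n) (bundle M₀ (Fin.last m)) ⊆
            bundle M' (Fin.last m) := Finset.insert_subset hcB hsub
        have h2 := Finset.card_le_card h1
        rw [Finset.card_insert_of_notMem hcold, hcardold] at h2
        omega
      obtain ⟨d, hd_old, hd_notB⟩ := Finset.not_subset.mp hnotsub
      have hle := hmin d (Finset.mem_union_right _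
        (Finset.mem_sdiff.mpr ⟨hd_old, hd_notB⟩))
      have hd' : (∃ x, d = cX x ∧ x ∈ lX) ∨ ∃ k, d = cW k ∧ k ∈ lW' := by
        rw [bundle_M₀_last] at hd_old
        rcases Finset.mem_union.mp hd_old with h | h
        · obtain ⟨x, -, rfl⟩ := Finset.mem_image.mp h
          exact Or.inl ⟨x, rfl, hlXall x⟩
        · obtain ⟨k, -, rfl⟩ := Finset.mem_image.mp h
          exact Or.inr ⟨k, rfl, hlW'all k⟩
      have hlt := last_indexOf_lt hm t lW lX lW' hj hd'
      omega
    subst hj0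
    intro j'
    by_cases hj' : j' = ⟨0, hm⟩
    · subst hj'; exact hcB
    · apply (hfeas (Fin.last m)).2.2 _ hcB
      rw [prereqJ_last_iff]
      refine ⟨⟨0, hm⟩, j', ?_, rfl, rfl⟩
      have hne0 : (j' : ℕ) ≠ 0 := fun h => hj' (Fin.ext h)
      exact Fin.lt_def.mpr (by simpa using Nat.pos_of_ne_zero hne0)
  rcases hlastcase with hlast_eq | hY
  · -- Case A: nobody can improve, contradiction
    exfalso
    obtain ⟨a, ha⟩ := himp
    by_cases h : (a : ℕ) < m
    · obtain ⟨i, rfl⟩ : ∃ i : Fin m, a = i.castSucc := ⟨⟨a.1, h⟩, castSucc_eq_of_lt h⟩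
      have hXtaken : ∀ x : Fin (3 * n), (cX x : Course m n) ∉ bundle M' i.castSucc := by
        intro x hx
        have h2 : (Fin.last m, (cX x : Course m n)) ∈ M' := by
          rw [← mem_bundle, hlast_eq, bundle_M₀_last]
          exact Finset.mem_union_left _ (Finset.mem_image.mpr ⟨x, Finset.mem_univ x, rfl⟩)
        exact castSucc_ne_last i (slots_unique (hslots (cX x)) (mem_bundle.mp hx) h2)
      have hWtaken : ∀ k : Fin (m - n), (cW k : Course m n) ∉ bundle M' i.castSucc := by
        intro k hk
        have h2 : (Fin.last m, (cW k : Course m n)) ∈ M' := by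
          rw [← mem_bundle, hlast_eq, bundle_M₀_last]
          exact Finset.mem_union_right _ (Finset.mem_image.mpr ⟨k, Finset.mem_univ k, rfl⟩)
        exact castSucc_ne_last i (slots_unique (hslots (cW k)) (mem_bundle.mp hk) h2)
      have hsub : bundle M' i.castSucc ⊆ {cY i} := by
        intro c hc
        rcases mem_castSucc_cases hm t lW lX lW' ((hfeas i.castSucc).1 c hc) with
          rfl | ⟨k, rfl, -⟩ | rfl | rfl | rfl | rfl
        · exfalso
          apply hXtaken (t i 0)
          apply (hfeas i.castSucc).2.2 _ hc
          rw [prereqJ_castSucc_iff]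
          exact Or.inl ⟨rfl, Or.inl rfl⟩
        · exact absurd hc (hWtaken k)
        · exact Finset.mem_singleton_self _
        · exact absurd hc (hXtaken _)
        · exact absurd hc (hXtaken _)
        · exact absurd hc (hXtaken _)
      obtain ⟨c, hc, -⟩ := ha
      rw [Finset.mem_sdiff, bundle_M₀_castSucc] at hc
      exact hc.2 (hsub hc.1)
    · obtain rfl : a = Fin.last m := eq_last_of_not_lt h
      rw [hlast_eq] at ha
      exact not_lexPrefers_self _ _ ha
  · -- Case B: extract the exact cover
    have hYnot : ∀ i : Fin m, (cY i : Course m n) ∉ bundle M' i.castSucc := by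
      intro i hx
      exact castSucc_ne_last i
        (slots_unique (hslots (cY i)) (mem_bundle.mp hx) (mem_bundle.mp (hY i)))
    set S : Finset (Fin m) :=
      Finset.univ.filter (fun i => (cT i : Course m n) ∈ bundle M' i.castSucc) with hS
    have hSx : ∀ i ∈ S, ∀ r : Fin 3, (cX (t i r) : Course m n) ∈ bundle M' i.castSucc := by
      intro i hi r
      have hT : (cT i : Course m n) ∈ bundle M' i.castSucc := (Finset.mem_filter.mp hi).2
      apply (hfeas i.castSucc).2.2 _ hT
      rw [prereqJ_castSucc_iff]
      refine Or.inl ⟨rfl, ?_⟩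
      fin_cases r
      · exact Or.inl rfl
      · exact Or.inr (Or.inl rfl)
      · exact Or.inr (Or.inr rfl)
    have hdisjS : ∀ i ∈ S, ∀ j ∈ S, i ≠ j →
        Disjoint ({t i 0, t i 1, t i 2} : Finset (Fin (3 * n))) {t j 0, t j 1, t j 2} := by
      intro i hi j hj hij
      rw [Finset.disjoint_left]
      intro x hxi hxj
      have hxin : ∀ i₀ : Fin m, i₀ ∈ S → x ∈ ({t i₀ 0, t i₀ 1, t i₀ 2} : Finset (Fin (3 * n))) →
          (cX x : Course m n) ∈ bundle M' i₀.castSucc := by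
        intro i₀ hi₀ hx
        rcases Finset.mem_insert.mp hx with rfl | hx'
        · exact hSx i₀ hi₀ 0
        · rcases Finset.mem_insert.mp hx' with rfl | hx''
          · exact hSx i₀ hi₀ 1
          · rw [Finset.mem_singleton] at hx''
            subst hx''
            exact hSx i₀ hi₀ 2
      have := slots_unique (hslots (cX x)) (mem_bundle.mp (hxin i hi hxi))
        (mem_bundle.mp (hxin j hj hxj))
      exact hij (Fin.castSucc_injective m this)
    have hWS : ∀ i : Fin m, i ∉ S → ∃ k, (cW k : Course m n) ∈ bundle M' i.castSucc := by
      intro i hiS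
      have hne : bundle M' i.castSucc ≠ bundle M₀ i.castSucc := by
        rw [bundle_M₀_castSucc]
        intro he
        exact hYnot i (he ▸ Finset.mem_singleton_self _)
      have hpref := (step0 i.castSucc).resolve_left hne
      rw [bundle_M₀_castSucc] at hpref
      obtain ⟨c, hc, hmin⟩ := hpref
      rw [Finset.mem_sdiff, Finset.mem_singleton] at hc
      obtain ⟨hcB, hcY⟩ := hc
      rcases mem_castSucc_cases hm t lW lX lW' ((hfeas i.castSucc).1 c hcB) with
        rfl | ⟨k, rfl, -⟩ | rfl | hcx | hcx | hcx
      · exact absurd (Finset.mem_filter.mpr ⟨Finset.mem_univ i, hcB⟩) hiS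
      · exact ⟨k, hcB⟩
      · exact absurd rfl hcY
      all_goals {
        exfalso
        have hYmem : (cY i : Course m n) ∈ ({cY i} : Finset (Course m n)) \
            bundle M' i.castSucc :=
          Finset.mem_sdiff.mpr ⟨Finset.mem_singleton_self _, hYnot i⟩
        have hle := hmin _ (Finset.mem_union_right _ hYmem)
        subst hcx
        have hlt0 := (ai_list_facts hm t lW lX lW' i).2 0
        have hlt1 := (ai_list_facts hm t lW lX lW' i).2 1
        have hlt2 := (ai_list_facts hm t lW lX lW' i).2 2
        omega }
    choose f hf using hWS
    set Vw : Finset (Fin (m - n)) :=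
      Finset.univ.filter (fun k => (cW k : Course m n) ∈ bundle M' (Fin.last m)) with hVw
    let F : {x // x ∈ Finset.univ \ S} → Fin (m - n) :=
      fun i => f i.1 (Finset.mem_sdiff.mp i.2).2
    have hfF : ∀ i : {x // x ∈ Finset.univ \ S},
        (cW (F i) : Course m n) ∈ bundle M' (Fin.castSucc i.1) :=
      fun i => hf i.1 (Finset.mem_sdiff.mp i.2).2
    have hFinj : Function.Injective F := by
      intro i j hij
      have h1 := hfF i
      have h2 := hfF j
      rw [hij] at h1
      have := slots_unique (hslots _) (mem_bundle.mp h1) (mem_bundle.mp h2)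
      exact Subtype.ext (Fin.castSucc_injective m this)
    have hFnot : ∀ i, F i ∉ Vw := by
      intro i hFi
      have h1 := hfF i
      have h2 := (Finset.mem_filter.mp hFi).2
      exact castSucc_ne_last i.1
        (slots_unique (hslots _) (mem_bundle.mp h1) (mem_bundle.mp h2))
    have hWcount : (Finset.univ \ S).card + Vw.card ≤ m - n := by
      have hdisjFV : Disjoint ((Finset.univ \ S).attach.image F) Vw := by
        rw [Finset.disjoint_left]
        rintro k hk1 hk2
        obtain ⟨i, -, rfl⟩ := Finset.mem_image.mp hk1
        exact hFnot i hk2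
      have himgcard : ((Finset.univ \ S).attach.image F).card = (Finset.univ \ S).card := by
        rw [Finset.card_image_of_injective _ hFinj, Finset.card_attach]
      have := Finset.card_le_card
        (Finset.subset_univ (((Finset.univ \ S).attach.image F) ∪ Vw))
      rw [Finset.card_union_of_disjoint hdisjFV, himgcard, Finset.card_univ,
        Fintype.card_fin] at this
      exact this
    have hUcard : (S.biUnion fun i => ({t i 0, t i 1, t i 2} : Finset (Fin (3 * n)))).card
        = 3 * S.card := by
      rw [Finset.card_biUnion hdisjS]
      rw [Finset.sum_congr rfl (fun i _ => triple_card t htinj i), Finset.sum_const,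
        smul_eq_mul]
      ring
    have hXcount : 3 * S.card ≤ 3 * n := by
      rw [← hUcard]
      have := Finset.card_le_card
        (Finset.subset_univ (S.biUnion fun i => ({t i 0, t i 1, t i 2} : Finset (Fin (3 * n)))))
      rwa [Finset.card_univ, Fintype.card_fin] at this
    have hcompl : (Finset.univ \ S).card = m - S.card := by
      rw [Finset.card_sdiff_of_subset (Finset.subset_univ _), Finset.card_univ, Fintype.card_fin]
    have hSle : S.card ≤ m := by
      have := Finset.card_le_card (Finset.subset_univ S)
      rwa [Finset.card_univ, Fintype.card_fin] at this
    have hScard : S.card = n := by omega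
    refine ⟨S, ?_, ?_⟩
    · intro i hi j hj hij
      exact hdisjS i hi j hj hij
    · apply Finset.eq_univ_of_card
      rw [hUcard, hScard, Fintype.card_fin]

end Backward

/-- the family `T` (given by `t`, each `T_i` a 3-element subset of
`X = Fin (3n)`, with `m ≥ n ≥ …`) has an exact 3-cover if and only if some matching
of the CAPR instance `J` dominates the matching `M₀`.  Capacities: `q(a_i) = 4`
for `i ≤ m`, `q(a_{m+1}) = 2n + m`, every course has capacity 1. -/
theorem exact_cover_iff_M_dominated {m n : ℕ} (hm : 0 < m) (hmn : n ≤ m)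
    (t : Fin m → Fin 3 → Fin (3 * n)) (htinj : ∀ i, Function.Injective (t i))
    (lW : List (Fin (m - n))) (hlW : lW.Nodup) (hlWall : ∀ k, k ∈ lW)
    (lX : List (Fin (3 * n))) (hlX : lX.Nodup) (hlXall : ∀ x, x ∈ lX)
    (lW' : List (Fin (m - n))) (hlW' : lW'.Nodup) (hlW'all : ∀ k, k ∈ lW') :
    (∃ T' : Finset (Fin m),
        ((T' : Set (Fin m)).Pairwise fun i j =>
          Disjoint ({t i 0, t i 1, t i 2} : Finset (Fin (3 * n)))
            {t j 0, t j 1, t j 2}) ∧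
        T'.biUnion (fun i => ({t i 0, t i 1, t i 2} : Finset (Fin (3 * n)))) =
          Finset.univ) ↔
      ∃ M' : Finset (Fin (m + 1) × Course m n),
        IsMatching (prefJ hm t lW lX lW')
          (fun a => if (a : ℕ) < m then 4 else 2 * n + m) (fun _ => 1)
          (prereqJ t) M' ∧
        Dominates (prefJ hm t lW lX lW') M' M₀ := by
  constructor
  · rintro ⟨T', hdisj, hcover⟩
    exact forward_dir hm hmn t htinj lW hlWall lX hlXall lW' hlW'all T' hdisj hcover
  · rintro ⟨M', hM, hdom⟩
    exact backward_dir hm hmn t htinj lW hlWall lX hlXall lW' hlW'all M' hM hdom
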